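/- A tuple (x̄, ρ̄, ε̄, λ̄, ū, π̄, ν̄, μ̄) ∈ ℝ^N × ℝ^N × ℝ^N × ℝ × ℝ^N × ℝ^N × ℝ × ℝ satisfies the equilibrium system: 0 = −qᵢ·x̄ᵢ − c₀ᵢ − ρ̄ᵢ − ūᵢ for all i; 0 = x̄ᵢ − aᵢ − ε̄ᵢ for all i; 0 = ρ̄ᵢ − λ̄ for all i; 0 = Σᵢ ε̄ᵢ; 0 = −ūᵢ/qᵢ − qᵢ·π̄ᵢ − x̄ᵢ − (c₀ᵢ + λmax)/qᵢ for all i; 0 = qᵢ·ūᵢ − ν̄ for all i; 0 = Σᵢ π̄ᵢ + μ̄; ν̄ ≥ 0; μ̄ ≥ 0; ν̄·μ̄ = 0, if and only if: λ̄ satisfies the scalar linear complementarity relation Σᵢ (φ(λ̄)ᵢ − aᵢ) ≥ 0, λmax − λ̄ ≥ 0, (Σᵢ (φ(λ̄)ᵢ − aᵢ))·(λmax − λ̄) = 0, and moreover ν̄ = (Σᵢ 1/qᵢ²)⁻¹·Σᵢ (φ(λ̄)ᵢ − aᵢ), x̄ᵢ = φ(λ̄)ᵢ − ν̄/qᵢ²,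 ūᵢ = ν̄/qᵢ, ρ̄ᵢ = λ̄, ε̄ᵢ = x̄ᵢ − aᵢ, π̄ᵢ = (λ̄ − λmax)/qᵢ², and μ̄ = (Σᵢ 1/qᵢ²)·(λmax − λ̄). -/

import Mathlib

/-- Characterization of the equilibria of the closed-loop system: a tuple is an equilibrium iff
its price component solves the scalar linear complementarity relation and all other components
take the stated closed forms. -/
theorem stmt_12 (N : ℕ) (hN : 0 < N) (q c₀ a : Fin N → ℝ) (hq : ∀ i, 0 < q i)
    (lamMax : ℝ) (φ : ℝ → Fin N → ℝ)
    (hφ : ∀ lam i, φ lam i = -(lam + c₀ i) / q i)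
    (xb ρb εb : Fin N → ℝ) (lamb : ℝ) (ub πb : Fin N → ℝ) (νb μb : ℝ) :
    ((∀ i, 0 = -(q i * xb i) - c₀ i - ρb i - ub i) ∧
        (∀ i, 0 = xb i - a i - εb i) ∧
        (∀ i, 0 = ρb i - lamb) ∧
        (0 = ∑ i, εb i) ∧
        (∀ i, 0 = -(ub i) / q i - q i * πb i - xb i - (c₀ i + lamMax) / q i) ∧
        (∀ i, 0 = q i * ub i - νb) ∧
        (0 = (∑ i, πb i) + μb) ∧
        0 ≤ νb ∧ 0 ≤ μb ∧ νb * μb = 0) ↔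
      ((0 ≤ ∑ i, (φ lamb i - a i) ∧ 0 ≤ lamMax - lamb ∧
          (∑ i, (φ lamb i - a i)) * (lamMax - lamb) = 0) ∧
        νb = (∑ i, 1 / (q i) ^ 2)⁻¹ * ∑ i, (φ lamb i - a i) ∧
        (∀ i, xb i = φ lamb i - νb / (q i) ^ 2) ∧
        (∀ i, ub i = νb / q i) ∧
        (∀ i, ρb i = lamb) ∧
        (∀ i, εb i = xb i - a i) ∧
        (∀ i, πb i = (lamb - lamMax) / (q i) ^ 2) ∧
        μb = (∑ i, 1 / (q i) ^ 2) * (lamMax - lamb)) := by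
  have hqne : ∀ i, q i ≠ 0 := fun i => (hq i).ne'
  have : Nonempty (Fin N) := ⟨⟨0, hN⟩⟩
  set S : ℝ := ∑ i, 1 / (q i) ^ 2 with hSdef
  have hS : 0 < S :=
    Finset.sum_pos (fun i _ => by have := hq i; positivity) Finset.univ_nonempty
  set T : ℝ := ∑ i, (φ lamb i - a i) with hTdef
  constructor
  · rintro ⟨h1, h2, h3, h4, h5, h6, h7, hν, hμ, hc⟩
    have hρ : ∀ i, ρb i = lamb := fun i => by have := h3 i; linarith
    have hub : ∀ i, ub i = νb / q i := fun i => by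
      have h := h6 i
      rw [eq_div_iff (hqne i)]
      linear_combination -h
    have hxb : ∀ i, xb i = φ lamb i - νb / (q i) ^ 2 := fun i => by
      have h := h1 i
      rw [hρ i, hub i] at h
      rw [hφ]
      field_simp [hqne i] at h ⊢
      linear_combination h
    have hε : ∀ i, εb i = xb i - a i := fun i => by have := h2 i; linarith
    have hTS : T = S * νb := by
      have h4' : (0:ℝ) = ∑ i, (φ lamb i - a i - νb * (1 / (q i) ^ 2)) := by
        rw [h4]
        exact Finset.sum_congr rfl fun i _ => by rw [hε i, hxb i]; ring
      rw [Finset.sum_sub_distrib, ← Finset.mul_sum] at h4'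
      rw [hTdef, hSdef]; linarith
    have hνb : νb = S⁻¹ * T := by
      rw [hTS]; field_simp
    have hπ : ∀ i, πb i = (lamb - lamMax) / (q i) ^ 2 := fun i => by
      have h := h5 i
      rw [hub i, hxb i, hφ] at h
      field_simp [hqne i] at h
      have h2 : (q i) ^ 2 * πb i = lamb - lamMax :=
        mul_left_cancel₀ (pow_ne_zero 5 (hqne i)) (by linear_combination q i ^ 4 * h)
      rw [eq_div_iff (pow_ne_zero 2 (hqne i))]
      linear_combination h2
    have hμb : μb = S * (lamMax - lamb) := by
      have hsum : ∑ i, πb i = (lamb - lamMax) * S := by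
        rw [hSdef, Finset.mul_sum]
        exact Finset.sum_congr rfl fun i _ => by rw [hπ i]; ring
      rw [hsum] at h7
      linear_combination -h7
    have hlam : 0 ≤ lamMax - lamb := by
      rw [hμb] at hμ
      exact nonneg_of_mul_nonneg_right hμ hS
    refine ⟨⟨?_, hlam, ?_⟩, hνb, hxb, hub, hρ, hε, hπ, hμb⟩
    · rw [hTS]; exact mul_nonneg hS.le hν
    · linear_combination (lamMax - lamb) * hTS - νb * hμb + hc
  · rintro ⟨⟨hT, hlam, hcomp⟩, hνb, hxb, hub, hρ, hε, hπ, hμb⟩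
    have hTS : T = S * νb := by
      rw [hνb, ← mul_assoc, mul_inv_cancel₀ hS.ne', one_mul]
    refine ⟨?_, ?_, ?_, ?_, ?_, ?_, ?_, ?_, ?_, ?_⟩
    · intro i
      rw [hρ i, hub i, hxb i, hφ]
      field_simp [hqne i]
      ring
    · intro i; rw [hε i]; ring
    · intro i; rw [hρ i]; ring
    · have hsum : ∑ i, εb i = T - νb * S := by
        rw [hTdef, hSdef, Finset.mul_sum, ← Finset.sum_sub_distrib]
        exact Finset.sum_congr rfl fun i _ => by rw [hε i, hxb i]; ring
      rw [hsum, hTS]; ring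
    · intro i
      rw [hub i, hxb i, hπ i, hφ]
      field_simp [hqne i]
      ring
    · intro i
      rw [hub i, mul_div_cancel₀ _ (hqne i)]
      ring
    · have hsum : ∑ i, πb i = (lamb - lamMax) * S := by
        rw [hSdef, Finset.mul_sum]
        exact Finset.sum_congr rfl fun i _ => by rw [hπ i]; ring
      rw [hsum, hμb]; ring
    · rw [hνb]; exact mul_nonneg (inv_nonneg.mpr hS.le) hT
    · rw [hμb]; exact mul_nonneg hS.le hlam
    · calc νb * μb = (S⁻¹ * S) * (T * (lamMax - lamb)) := by rw [hνb, hμb]; ring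
        _ = T * (lamMax - lamb) := by rw [inv_mul_cancel₀ hS.ne', one_mul]
        _ = 0 := hcomp
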